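/- Let v > n, k with 1 ≤ k ≤ n, and d such that d > c_k where c_k = (v-n)/(kv+n) and d < 1/k. Suppose y ∈ ℝⁿ and there exist sequences tʲ = (t₁ʲ,…,tₙʲ) ∈ ℝ₊ⁿ with tʲ := Σᵢtᵢʲ → ∞, at least k indices i satisfy tᵢʲ ≥ d·tʲ, and integer vectors (qʲ,pʲ) ∈ ℤⁿ×ℤ with qʲ ≠ 0 having exactly m < k nonzero entries, such that e^{tʲ}|⟨qʲ,y⟩+pʲ| ≤ e^{-d tʲ} and e^{-tᵢʲ}|qᵢʲ| ≤ e^{-d tʲ} for all i. Then Π₊(qʲ) ≤ e^{tʲ - k d tʲ} and |⟨qʲ,y⟩+pʲ| ≤ e^{-tʲ - d tʲ}, hence ω×(y) ≥ (n + nd)/(1 - kd) > v. -/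

import Mathlib

open scoped BigOperators

/-- Π₊(q) = ∏ᵢ max(1,|qᵢ|). -/
noncomputable def piPlus {n : ℕ} (q : Fin n → ℤ) : ℝ :=
  ∏ i, max 1 |(q i : ℝ)|

/-- The multiplicative Diophantine exponent ω×(y). -/
noncomputable def omegaTimes {n : ℕ} (y : Fin n → ℝ) : EReal :=
  sSup (Real.toEReal '' {u : ℝ |
    {q : Fin n → ℤ | ∃ p : ℤ,
      |(∑ i, (q i : ℝ) * y i) + (p : ℝ)| < piPlus q ^ (-(u / n))}.Infinite})

set_option maxHeartbeats 1000000

lemma one_le_piPlus {n : ℕ} (q : Fin n → ℤ) : 1 ≤ piPlus q := by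
  unfold piPlus
  calc (1:ℝ) = ∏ _i : Fin n, 1 := by simp
    _ ≤ _ := Finset.prod_le_prod (fun i _ => zero_le_one) (fun i _ => le_max_left _ _)

/-- The case m < k of Lemma 4.3: from unboundedly many times `tʲ` with at least `k`
indices satisfying `tᵢʲ ≥ d tʲ` and integer vectors `qʲ ≠ 0` with `m < k` nonzero
entries satisfying the contraction estimates, one gets
`Π₊(qʲ) ≤ e^{tʲ - kd tʲ}`, `|⟨qʲ,y⟩+pʲ| ≤ e^{-tʲ - d tʲ}`, and hence
`ω×(y) ≥ (n+nd)/(1-kd) > v`. -/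
theorem negation_case_m_lt_k (n k : ℕ) (hk : 1 ≤ k) (hkn : k ≤ n)
    (v : ℝ) (hv : (n : ℝ) < v) (d : ℝ)
    (hd : (v - n) / (k * v + n) < d) (hd' : d < 1 / k)
    (y : Fin n → ℝ)
    (t : ℕ → Fin n → ℝ) (ht : ∀ j i, 0 ≤ t j i)
    (T : ℕ → ℝ) (hT : ∀ j, T j = ∑ i, t j i)
    (hTtop : Filter.Tendsto T Filter.atTop Filter.atTop)
    (hbig : ∀ j, k ≤ (Finset.univ.filter fun i => d * T j ≤ t j i).card)
    (q : ℕ → Fin n → ℤ) (p : ℕ → ℤ) (hq0 : ∀ j, q j ≠ 0)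
    (m : ℕ) (hm : m < k)
    (hsupp : ∀ j, (Finset.univ.filter fun i => q j i ≠ 0).card = m)
    (hlast : ∀ j, Real.exp (T j) * |(∑ i, (q j i : ℝ) * y i) + (p j : ℝ)| ≤
      Real.exp (-(d * T j)))
    (hcoord : ∀ j i, Real.exp (-(t j i)) * |(q j i : ℝ)| ≤ Real.exp (-(d * T j))) :
    (∀ j, piPlus (q j) ≤ Real.exp (T j - k * d * T j) ∧
        |(∑ i, (q j i : ℝ) * y i) + (p j : ℝ)| ≤ Real.exp (-(T j) - d * T j)) ∧
    ((((n : ℝ) + n * d) / (1 - k * d) : ℝ) : EReal) ≤ omegaTimes y ∧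
    v < ((n : ℝ) + n * d) / (1 - k * d) := by
  have hn : 1 ≤ n := le_trans hk hkn
  have hn0 : (0:ℝ) < n := by exact_mod_cast Nat.lt_of_lt_of_le Nat.zero_lt_one hn
  have hk0 : (0:ℝ) < k := by exact_mod_cast Nat.lt_of_lt_of_le Nat.zero_lt_one hk
  have hv0 : (0:ℝ) < v := lt_trans hn0 hv
  have hden : (0:ℝ) < k * v + n := by positivity
  have hd0 : 0 < d := lt_trans (div_pos (by linarith) hden) hd
  have hkd : k * d < 1 := by
    have h2 : d * k < 1 := (lt_div_iff₀ hk0).mp hd'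
    linarith
  have h1kd : (0:ℝ) < 1 - k * d := by linarith
  -- part 3
  have part3 : v < ((n : ℝ) + n * d) / (1 - k * d) := by
    rw [lt_div_iff₀ h1kd]
    have h1 : v - n < d * (k * v + n) := (div_lt_iff₀ hden).mp hd
    nlinarith
  have hT0 : ∀ j, 0 ≤ T j := fun j => by
    rw [hT j]; exact Finset.sum_nonneg fun i _ => ht j i
  -- part 1
  have part1 : ∀ j, piPlus (q j) ≤ Real.exp (T j - k * d * T j) ∧
      |(∑ i, (q j i : ℝ) * y i) + (p j : ℝ)| ≤ Real.exp (-(T j) - d * T j) := by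
    intro j
    constructor
    · set S := Finset.univ.filter fun i => q j i ≠ 0 with hS
      set I₂ := Finset.univ.filter fun i => d * T j ≤ t j i with hI
      have hcb : ∀ i, |(q j i : ℝ)| ≤ Real.exp (t j i - d * T j) := by
        intro i
        rw [show t j i - d * T j = -(d * T j) - -(t j i) by ring, Real.exp_sub,
          le_div_iff₀ (Real.exp_pos _), mul_comm]
        exact hcoord j i
      have hSsub : S ⊆ I₂ := by
        intro i hi
        simp only [hS, Finset.mem_filter, Finset.mem_univ, true_and] at hi
        simp only [hI, Finset.mem_filter, Finset.mem_univ, true_and]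
        have hq1 : (1:ℝ) ≤ |(q j i : ℝ)| := by
          rw [← Int.cast_abs]; exact_mod_cast Int.one_le_abs hi
        have h1 : Real.exp (-(t j i)) * 1 ≤ Real.exp (-(d * T j)) :=
          le_trans (mul_le_mul_of_nonneg_left hq1 (Real.exp_pos _).le) (hcoord j i)
        rw [mul_one, Real.exp_le_exp, neg_le_neg_iff] at h1
        exact h1
      have hdT : 0 ≤ d * T j := mul_nonneg hd0.le (hT0 j)
      have step1 : piPlus (q j) ≤ ∏ i, if q j i ≠ 0 then Real.exp (t j i - d * T j) else 1 := by
        apply Finset.prod_le_prod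
        · intro i _; exact le_trans zero_le_one (le_max_left _ _)
        · intro i _
          by_cases hi : q j i = 0
          · simp [hi]
          · have hiI : d * T j ≤ t j i := by
              have := hSsub (by simp [hS, hi] : i ∈ S)
              simpa [hI] using this
            simp only [hi, ne_eq, not_false_eq_true, if_true]
            exact max_le (Real.one_le_exp (by linarith)) (hcb i)
      have step2 : (∏ i, if q j i ≠ 0 then Real.exp (t j i - d * T j) else 1)
          = Real.exp (∑ i ∈ S, (t j i - d * T j)) := by
        rw [Real.exp_sum, hS, Finset.prod_filter]
      have hcardS : S.card = m := hsupp j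
      have hsum1 : ∑ i ∈ I₂ \ S, t j i + ∑ i ∈ S, t j i = ∑ i ∈ I₂, t j i :=
        Finset.sum_sdiff hSsub
      have hsum2 : ∑ i ∈ I₂, t j i ≤ T j := by
        rw [hT j]
        exact Finset.sum_le_sum_of_subset_of_nonneg (Finset.subset_univ _)
          (fun i _ _ => ht j i)
      have hsum3 : ((I₂ \ S).card : ℝ) * (d * T j) ≤ ∑ i ∈ I₂ \ S, t j i := by
        have := Finset.card_nsmul_le_sum (I₂ \ S) (t j) (d * T j)
          (fun i hi => by
            have := (Finset.mem_sdiff.mp hi).1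
            simpa [hI] using this)
        simpa [nsmul_eq_mul] using this
      have hcardsd : k - m ≤ (I₂ \ S).card := by
        rw [Finset.card_sdiff_of_subset hSsub, hcardS]
        exact Nat.sub_le_sub_right (hbig j) m
      have hcardsd' : (k : ℝ) - m ≤ ((I₂ \ S).card : ℝ) := by
        have hmk : m ≤ k := hm.le
        have h1 : ((k - m : ℕ) : ℝ) ≤ ((I₂ \ S).card : ℝ) := Nat.cast_le.mpr hcardsd
        rwa [Nat.cast_sub hmk] at h1
      have hsumS : ∑ i ∈ S, (t j i - d * T j) ≤ T j - k * d * T j := by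
        rw [Finset.sum_sub_distrib, Finset.sum_const, hcardS, nsmul_eq_mul]
        nlinarith [hsum1, hsum2, hsum3, hcardsd', hdT]
      calc piPlus (q j) ≤ _ := step1
        _ = _ := step2
        _ ≤ _ := Real.exp_le_exp.mpr hsumS
    · have h1 := hlast j
      have hE : Real.exp (T j) * Real.exp (-(T j) - d * T j) = Real.exp (-(d * T j)) := by
        rw [← Real.exp_add]; congr 1; ring
      have h3 : Real.exp (T j) * |(∑ i, (q j i : ℝ) * y i) + (p j : ℝ)|
          ≤ Real.exp (T j) * Real.exp (-(T j) - d * T j) := by rw [hE]; exact h1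
      exact le_of_mul_le_mul_left h3 (Real.exp_pos (T j))
  refine ⟨part1, ?_, part3⟩
  -- part 2
  set w : ℝ := ((n : ℝ) + n * d) / (1 - k * d) with hw
  have hwkey : (1 - k * d) * (w / n) = 1 + d := by
    rw [hw]; field_simp
  have habs : ∀ j, |(∑ i, (q j i : ℝ) * y i) + (p j : ℝ)|
      ≤ Real.exp (-((1 + d) * T j)) := fun j => by
    have := (part1 j).2
    calc |(∑ i, (q j i : ℝ) * y i) + (p j : ℝ)| ≤ Real.exp (-(T j) - d * T j) := this
      _ = Real.exp (-((1 + d) * T j)) := by ring_nf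
  have hpp : ∀ j, piPlus (q j) ≤ Real.exp ((1 - k * d) * T j) := fun j => by
    have := (part1 j).1
    calc piPlus (q j) ≤ Real.exp (T j - k * d * T j) := this
      _ = Real.exp ((1 - k * d) * T j) := by ring_nf
  have hfinT : ∀ M : ℝ, {j : ℕ | T j ≤ M}.Finite := by
    intro M
    have hev : ∀ᶠ j in Filter.atTop, M + 1 ≤ T j := hTtop.eventually_ge_atTop (M + 1)
    rw [← Nat.cofinite_eq_atTop] at hev
    have := Filter.eventually_cofinite.mp hev
    exact this.subset fun j hj => by simp only [Set.mem_setOf_eq] at *; linarith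
  -- key claim
  have key : ∀ u : ℝ, u < w → {q' : Fin n → ℤ | ∃ p' : ℤ,
      |(∑ i, (q' i : ℝ) * y i) + (p' : ℝ)| < piPlus q' ^ (-(u / n))}.Infinite := by
    intro u hu
    set A := {q' : Fin n → ℤ | ∃ p' : ℤ,
      |(∑ i, (q' i : ℝ) * y i) + (p' : ℝ)| < piPlus q' ^ (-(u / n))} with hA
    by_cases hfin : (Set.range q).Finite
    · -- Case B : some q₀ repeats infinitely often; then ⟨q₀,y⟩ + p₀ = 0
      haveI : Finite (Set.range q) := hfin
      obtain ⟨⟨q₀, hq₀mem⟩, hfib⟩ := Finite.exists_infinite_fiber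
        (fun j => (⟨q j, Set.mem_range_self j⟩ : Set.range q))
      have hSinf : {j : ℕ | q j = q₀}.Infinite := by
        have hEq : {j : ℕ | q j = q₀} =
            (fun j => (⟨q j, Set.mem_range_self j⟩ : Set.range q)) ⁻¹' {⟨q₀, hq₀mem⟩} := by
          ext j
          simp [Set.mem_preimage, Subtype.ext_iff]
        exact hEq ▸ Set.infinite_coe_iff.mp hfib
      obtain ⟨j₀, hj₀⟩ := hSinf.nonempty
      have hq₀ne : q₀ ≠ 0 := hj₀ ▸ hq0 j₀
      set r : ℝ := ∑ i, (q₀ i : ℝ) * y i with hr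
      have hcl : (-r) ∈ Set.range ((↑) : ℤ → ℝ) := by
        have hclosed : IsClosed (Set.range ((↑) : ℤ → ℝ)) :=
          Int.isClosedEmbedding_coe_real.isClosed_range
        rw [← hclosed.closure_eq]
        rw [Metric.mem_closure_iff]
        intro ε hε
        obtain ⟨j, hjS, hjT⟩ : ∃ j, q j = q₀ ∧ -Real.log ε < T j := by
          obtain ⟨j, hj1, hj2⟩ := (hSinf.diff (hfinT (-Real.log ε))).nonempty
          exact ⟨j, hj1, by simpa using not_le.mp (by simpa using hj2)⟩
        refine ⟨(p j : ℝ), Set.mem_range_self _, ?_⟩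
        have h1 : |r + (p j : ℝ)| ≤ Real.exp (-((1 + d) * T j)) := by
          have := habs j; rwa [hjS] at this
        have h2 : Real.exp (-((1 + d) * T j)) ≤ Real.exp (-(T j)) := by
          apply Real.exp_le_exp.mpr
          nlinarith [mul_nonneg hd0.le (hT0 j)]
        have h3 : Real.exp (-(T j)) < ε := by
          rw [← Real.lt_log_iff_exp_lt hε]
          linarith
        have : dist (-r) ((p j : ℝ)) = |r + (p j : ℝ)| := by
          rw [Real.dist_eq]; rw [abs_sub_comm]; congr 1; ring
        rw [this]
        linarith
      obtain ⟨p₀, hp₀⟩ := hcl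
      have hrp : r + ((p₀ : ℤ) : ℝ) = 0 := by linarith [hp₀]
      -- now all multiples work
      obtain ⟨i₀, hi₀⟩ : ∃ i, q₀ i ≠ 0 := by
        by_contra h
        push_neg at h
        exact hq₀ne (funext h)
      have hinj : Function.Injective (fun c : ℤ => (fun i => c * q₀ i : Fin n → ℤ)) := by
        intro a b hab
        have := congrFun hab i₀
        exact mul_right_cancel₀ hi₀ this
      apply (Set.infinite_range_of_injective hinj).mono
      rintro _ ⟨c, rfl⟩
      refine ⟨c * p₀, ?_⟩
      have hrp' : (∑ i, (q₀ i : ℝ) * y i) + ((p₀ : ℤ) : ℝ) = 0 := hrp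
      have hz : (∑ i, (((fun i => c * q₀ i) : Fin n → ℤ) i : ℝ) * y i)
          + ((c * p₀ : ℤ) : ℝ) = 0 := by
        push_cast
        have hsum : ∑ i, (c : ℝ) * (q₀ i : ℝ) * y i
            = (c : ℝ) * ∑ i, (q₀ i : ℝ) * y i := by
          rw [Finset.mul_sum]; exact Finset.sum_congr rfl fun i _ => by ring
        rw [hsum]
        linear_combination (c : ℝ) * hrp'
      simp only [Set.mem_setOf_eq]
      rw [hz, abs_zero]
      exact Real.rpow_pos_of_pos (lt_of_lt_of_le zero_lt_one (one_le_piPlus _)) _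
    · -- Case A : infinitely many distinct q j
      have hfin0 : ({j : ℕ | T j ≤ 0}).Finite := hfinT 0
      have himg : (q '' {j | 0 < T j}).Infinite := by
        intro hIf
        apply hfin
        have hsub : Set.range q ⊆ q '' {j | 0 < T j} ∪ q '' {j | T j ≤ 0} := by
          rintro _ ⟨j, rfl⟩
          rcases le_or_gt (T j) 0 with h | h
          · exact Or.inr ⟨j, h, rfl⟩
          · exact Or.inl ⟨j, h, rfl⟩
        exact (hIf.union (hfin0.image q)).subset hsub
      apply himg.mono
      rintro _ ⟨j, hj, rfl⟩
      refine ⟨p j, ?_⟩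
      have hTj : 0 < T j := hj
      have hppj := hpp j
      have habsj := habs j
      have hexp1 : (0:ℝ) < Real.exp ((1 - k * d) * T j) := Real.exp_pos _
      rcases le_or_gt u 0 with hu0 | hu0
      · have h1 : (1:ℝ) ≤ piPlus (q j) ^ (-(u / n)) :=
          Real.one_le_rpow (one_le_piPlus _)
            (neg_nonneg.mpr (div_nonpos_of_nonpos_of_nonneg hu0 hn0.le))
        have h2 : Real.exp (-((1 + d) * T j)) < 1 :=
          Real.exp_lt_one_iff.mpr (by nlinarith)
        exact lt_of_le_of_lt habsj (lt_of_lt_of_le h2 h1)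
      · have hppos : (0:ℝ) < piPlus (q j) :=
          lt_of_lt_of_le zero_lt_one (one_le_piPlus _)
        have hstep : Real.exp ((1 - k * d) * T j) ^ (-(u / n))
            ≤ piPlus (q j) ^ (-(u / n)) :=
          Real.rpow_le_rpow_of_nonpos hppos hppj
            (neg_nonpos.mpr (div_nonneg hu0.le hn0.le))
        have heq : Real.exp ((1 - k * d) * T j) ^ (-(u / n))
            = Real.exp ((1 - k * d) * T j * (-(u / n))) := (Real.exp_mul _ _).symm
        have hlt : Real.exp (-((1 + d) * T j))
            < Real.exp ((1 - k * d) * T j * (-(u / n))) := by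
          apply Real.exp_lt_exp.mpr
          have hdiv : u / n < w / n := by
            apply div_lt_div_of_pos_right hu hn0
          have hmul : (1 - k * d) * (u / n) < 1 + d := by
            calc (1 - k * d) * (u / n) < (1 - k * d) * (w / n) :=
              mul_lt_mul_of_pos_left hdiv h1kd
              _ = 1 + d := hwkey
          nlinarith [mul_lt_mul_of_pos_right hmul hTj]
        calc |(∑ i, (q j i : ℝ) * y i) + (p j : ℝ)|
            ≤ Real.exp (-((1 + d) * T j)) := habsj
          _ < Real.exp ((1 - k * d) * T j * (-(u / n))) := hlt
          _ = Real.exp ((1 - k * d) * T j) ^ (-(u / n)) := heq.symm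
          _ ≤ piPlus (q j) ^ (-(u / n)) := hstep
  -- conclude sSup bound
  by_contra hcon
  push_neg at hcon
  obtain ⟨z, hz1, hz2⟩ := EReal.exists_between_coe_real hcon
  have hzw : z < w := by exact_mod_cast hz2
  have hzmem : (z : EReal) ≤ omegaTimes y := by
    rw [omegaTimes]
    exact le_sSup ⟨z, key z hzw, rfl⟩
  exact absurd hzmem (not_le.mpr hz1)
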